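/- Let 𝒜 be an arrangement of n ≥ 3 pairwise non-proportional linear forms in K[x₁,...,x_k] with rank(𝒜) ≥ 3. Let X₁,...,X_r be the distinct rank-2 flats of 𝒜 and n_u := |𝒜_{X_u}| the number of hyperplanes containing X_u. Then n₁ + ⋯ + n_r − r ≥ n. -/
import Mathlib


open MvPolynomial Finset Classical

noncomputable section

/-- The rank-2 flats of the arrangement defined by `ℓ`, encoded by the sets
`𝒜_X = {u | ℓ_u ∈ span(ℓᵢ, ℓⱼ)}` for pairs `i ≠ j`. -/
noncomputable def rank2Flats {K : Type*} [Field K] {k n : ℕ}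
    (ℓ : Fin n → MvPolynomial (Fin k) K) : Finset (Finset (Fin n)) :=
  Finset.image
    (fun p : Fin n × Fin n =>
      Finset.univ.filter (fun u => ℓ u ∈ Submodule.span K {ℓ p.1, ℓ p.2}))
    (Finset.univ.filter (fun p : Fin n × Fin n => p.1 ≠ p.2))

/-- For an arrangement of `n ≥ 3` pairwise non-proportional linear forms of rank `≥ 3`, with
rank-2 flats `X₁,...,X_r` of sizes `n_u = |𝒜_{X_u}|`, one has `n₁+⋯+n_r − r ≥ n`. -/
theorem stmt9 {K : Type*} [Field K] [CharZero K] {k n : ℕ} (hn : 3 ≤ n)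
    (ℓ : Fin n → MvPolynomial (Fin k) K)
    (hhom : ∀ i, (ℓ i).IsHomogeneous 1)
    (hne : ∀ i, ℓ i ≠ 0)
    (hprop : ∀ i j : Fin n, i ≠ j → ∀ c : K, ℓ i ≠ c • ℓ j)
    (hrank : 3 ≤ Module.finrank K (Submodule.span K (Set.range ℓ))) :
    n + (rank2Flats ℓ).card ≤ ∑ S ∈ rank2Flats ℓ, S.card := by
  classical
  set F := rank2Flats ℓ with hF
  -- every flat has at least 2 elements
  have hcard2 : ∀ S ∈ F, 2 ≤ S.card := by
    intro S hS
    simp only [hF, rank2Flats, mem_image, mem_filter, mem_univ, true_and] at hS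
    obtain ⟨p, hp, rfl⟩ := hS
    rw [show (2:ℕ) = 1 + 1 from rfl, Nat.succ_le_iff, Finset.one_lt_card]
    refine ⟨p.1, ?_, p.2, ?_, hp⟩ <;>
      simp only [mem_filter, mem_univ, true_and] <;>
      exact Submodule.subset_span (by simp)
  have h2r : 2 * F.card ≤ ∑ S ∈ F, S.card := by
    calc 2 * F.card = ∑ _S ∈ F, 2 := by rw [Finset.sum_const, smul_eq_mul, mul_comm]
    _ ≤ ∑ S ∈ F, S.card := Finset.sum_le_sum hcard2
  -- each index lies in at least two flats
  have hi2 : ∀ i : Fin n, 2 ≤ (F.filter (fun S => i ∈ S)).card := by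
    intro i
    haveI : Nontrivial (Fin n) := Fin.nontrivial_iff_two_le.mpr (by omega)
    obtain ⟨j, hj⟩ := exists_ne i
    have hm : ∃ m, ℓ m ∉ Submodule.span K {ℓ i, ℓ j} := by
      by_contra h
      push_neg at h
      have hle : Submodule.span K (Set.range ℓ) ≤ Submodule.span K {ℓ i, ℓ j} := by
        rw [Submodule.span_le]; rintro _ ⟨u, rfl⟩; exact h u
      haveI : FiniteDimensional K (Submodule.span K ({ℓ i, ℓ j} :
          Set (MvPolynomial (Fin k) K))) :=
        FiniteDimensional.span_of_finite K ((Set.finite_singleton _).insert _)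
      have h2 : Module.finrank K
          (Submodule.span K ({ℓ i, ℓ j} : Set (MvPolynomial (Fin k) K))) ≤ 2 := by
        refine le_trans (finrank_span_le_card ({ℓ i, ℓ j} :
          Set (MvPolynomial (Fin k) K))) ?_
        rw [Set.toFinset_insert, Set.toFinset_singleton]
        exact le_trans (Finset.card_insert_le _ _) (by simp)
      have := (Submodule.finrank_mono hle).trans h2
      omega
    obtain ⟨m, hmnot⟩ := hm
    have hmi : m ≠ i := fun h => hmnot (h ▸ Submodule.subset_span (by simp))
    set S1 : Finset (Fin n) :=
      Finset.univ.filter (fun u => ℓ u ∈ Submodule.span K {ℓ i, ℓ j}) with hS1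
    set S2 : Finset (Fin n) :=
      Finset.univ.filter (fun u => ℓ u ∈ Submodule.span K {ℓ i, ℓ m}) with hS2
    have hS1F : S1 ∈ F := by
      simp only [hF, rank2Flats, mem_image, mem_filter, mem_univ, true_and]
      exact ⟨(i, j), hj.symm, rfl⟩
    have hS2F : S2 ∈ F := by
      simp only [hF, rank2Flats, mem_image, mem_filter, mem_univ, true_and]
      exact ⟨(i, m), hmi.symm, rfl⟩
    have hiS1 : i ∈ S1 := by
      simp only [hS1, mem_filter, mem_univ, true_and]
      exact Submodule.subset_span (by simp)
    have hiS2 : i ∈ S2 := by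
      simp only [hS2, mem_filter, mem_univ, true_and]
      exact Submodule.subset_span (by simp)
    have hmS2 : m ∈ S2 := by
      simp only [hS2, mem_filter, mem_univ, true_and]
      exact Submodule.subset_span (by simp)
    have hmS1 : m ∉ S1 := by
      simp only [hS1, mem_filter, mem_univ, true_and]
      exact hmnot
    have hne12 : S1 ≠ S2 := fun h => hmS1 (h ▸ hmS2)
    rw [show (2:ℕ) = 1 + 1 from rfl, Nat.succ_le_iff, Finset.one_lt_card]
    exact ⟨S1, Finset.mem_filter.mpr ⟨hS1F, hiS1⟩,
      S2, Finset.mem_filter.mpr ⟨hS2F, hiS2⟩, hne12⟩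
  -- double counting incidences
  have hdc : ∑ S ∈ F, S.card = ∑ i : Fin n, (F.filter (fun S => i ∈ S)).card := by
    simp_rw [Finset.card_filter]
    rw [Finset.sum_comm]
    refine Finset.sum_congr rfl fun S _ => ?_
    simp [Finset.card_filter]
  have h2n : 2 * n ≤ ∑ S ∈ F, S.card := by
    rw [hdc]
    calc 2 * n = ∑ _i : Fin n, 2 := by simp [mul_comm]
    _ ≤ _ := Finset.sum_le_sum fun i _ => hi2 i
  omega

end
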